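/- Greedy optimality: define the greedy sequence P_0 = ∅ and P_{i+1} = P_i ∪ {u_i}, where u_i is a leaf not in P_i minimizing f⃗(P_i ∪ {u}) lexicographically. Then for each i ≤ ρ there exists an optimal placement P* of size ρ (lexicominimizing f⃗) with P_i ⊆ P*. -/
import Mathlib


open scoped Classical

/-- A rooted tree on a finite vertex set `V`, given by a parent function under which
every vertex reaches the root. -/
structure FailTree (V : Type*) [Fintype V] where
  root : V
  parent : V → V
  parent_root : parent root = root
  reaches_root : ∀ v, ∃ n : ℕ, parent^[n] v = root

namespace FailTree

variable {V : Type*} [Fintype V]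

/-- `T.Desc u v` : `u` is a descendant of `v` (every node is a descendant of itself). -/
def Desc (T : FailTree V) (u v : V) : Prop := ∃ n : ℕ, T.parent^[n] u = v

/-- A leaf is a node with no children. -/
def IsLeaf (T : FailTree V) (v : V) : Prop := ∀ u, T.parent u = v → u = v

noncomputable def leaves (T : FailTree V) : Finset V :=
  Finset.univ.filter fun v => T.IsLeaf v

/-- The failure number `f(v, P)` of node `v` under placement `P`:
the number of members of `P` that are descendants of `v`. -/
noncomputable def fnum (T : FailTree V) (v : V) (P : Finset V) : ℕ :=
  (P.filter fun p => T.Desc p v).card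

/-- The failure aggregate restricted to a set `S` of nodes: entry `i` counts the
nodes of `S` having failure number `i`. -/
noncomputable def faggOn (T : FailTree V) (S P : Finset V) : ℕ → ℕ :=
  fun i => (S.filter fun v => T.fnum v P = i).card

/-- The failure aggregate `f⃗(P)`: entry `i` counts the nodes with failure number `i`. -/
noncomputable def fagg (T : FailTree V) (P : Finset V) : ℕ → ℕ :=
  T.faggOn Finset.univ P

/-- The node set of the path from the root to `x`, i.e. all ancestors of `x`. -/
noncomputable def pathTo (T : FailTree V) (x : V) : Finset V :=
  Finset.univ.filter fun v => T.Desc x v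

/-- The number of leaves in the subtree rooted at `v`. -/
noncomputable def leafCount (T : FailTree V) (v : V) : ℕ :=
  (T.leaves.filter fun l => T.Desc l v).card

end FailTree

/-- Strict lexicographic comparison of failure aggregates; entries with higher index
(higher failure number) are more significant. -/
def AggLt (p q : ℕ → ℕ) : Prop := ∃ m, p m < q m ∧ ∀ i, m < i → p i = q i

/-- Lexicographic comparison (non-strict) of failure aggregates. -/
def AggLe (p q : ℕ → ℕ) : Prop := p = q ∨ AggLt p q

namespace FailTree
variable {V : Type*} [Fintype V]
variable (T : FailTree V)

lemma desc_refl (v : V) : T.Desc v v := ⟨0, rfl⟩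

lemma desc_trans {a b c : V} (h1 : T.Desc a b) (h2 : T.Desc b c) : T.Desc a c := by
  obtain ⟨m, hm⟩ := h1; obtain ⟨n, hn⟩ := h2
  exact ⟨n + m, by rw [Function.iterate_add_apply, hm, hn]⟩

lemma desc_root (v : V) : T.Desc v T.root := T.reaches_root v

lemma iterate_root (n : ℕ) : T.parent^[n] T.root = T.root :=
  Function.iterate_fixed T.parent_root n

noncomputable def depth (v : V) : ℕ := Nat.find (T.reaches_root v)

lemma iterate_depth (v : V) : T.parent^[T.depth v] v = T.root := Nat.find_spec (T.reaches_root v)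

lemma depth_root : T.depth T.root = 0 :=
  Nat.eq_zero_of_le_zero (Nat.find_le rfl)

lemma depth_lt_of_desc {v z : V} (h : T.Desc v z) : z = v ∨ T.depth z < T.depth v := by
  obtain ⟨k, hk⟩ := h
  rcases Nat.lt_or_ge (T.depth v) k with hlt | hge
  · have hz : z = T.root := by
      rw [← hk, show k = (k - T.depth v) + T.depth v by omega, Function.iterate_add_apply,
        T.iterate_depth, T.iterate_root]
    rcases Nat.eq_zero_or_pos (T.depth v) with h0 | h0
    · left
      have hv : v = T.root := by have := T.iterate_depth v; rwa [h0] at this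
      rw [hz, hv]
    · right; rw [hz, T.depth_root]; exact h0
  · rcases Nat.eq_zero_or_pos k with h0 | h0
    · left; rw [← hk, h0]; rfl
    · right
      have hroot : T.parent^[T.depth v - k] z = T.root := by
        rw [← hk, ← Function.iterate_add_apply,
          show T.depth v - k + k = T.depth v by omega]
        exact T.iterate_depth v
      have hle : T.depth z ≤ T.depth v - k := Nat.find_le hroot
      omega

lemma desc_comparable {u a b : V} (ha : T.Desc u a) (hb : T.Desc u b) :
    T.Desc a b ∨ T.Desc b a := by
  obtain ⟨m, hm⟩ := ha; obtain ⟨n, hn⟩ := hb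
  rcases le_total m n with h | h
  · left; exact ⟨n - m, by rw [← hm, ← Function.iterate_add_apply, Nat.sub_add_cancel h, hn]⟩
  · right; exact ⟨m - n, by rw [← hn, ← Function.iterate_add_apply, Nat.sub_add_cancel h, hm]⟩

lemma fnum_le_card (v : V) (P : Finset V) : T.fnum v P ≤ P.card := Finset.card_filter_le _ _

lemma fnum_mono {P Q : Finset V} (h : P ⊆ Q) (v : V) : T.fnum v P ≤ T.fnum v Q :=
  Finset.card_le_card (Finset.filter_subset_filter _ h)

lemma fnum_insert {x : V} {Q : Finset V} (hx : x ∉ Q) (v : V) :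
    T.fnum v (insert x Q) = T.fnum v Q + (if T.Desc x v then 1 else 0) := by
  unfold fnum
  rw [Finset.filter_insert]
  split
  · rw [Finset.card_insert_of_notMem (fun h => hx (Finset.mem_filter.mp h).1)]
  · simp

end FailTree


lemma aggLe_refl (p : ℕ → ℕ) : AggLe p p := Or.inl rfl

lemma aggLt_trans {p q r : ℕ → ℕ} (h1 : AggLt p q) (h2 : AggLt q r) : AggLt p r := by
  obtain ⟨m1, hlt1, heq1⟩ := h1; obtain ⟨m2, hlt2, heq2⟩ := h2
  rcases lt_trichotomy m1 m2 with h | h | h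
  · exact ⟨m2, by rw [heq1 m2 h]; exact hlt2,
      fun i hi => by rw [heq1 i (h.trans hi), heq2 i hi]⟩
  · subst h
    exact ⟨m1, hlt1.trans hlt2, fun i hi => by rw [heq1 i hi, heq2 i hi]⟩
  · exact ⟨m1, by rw [← heq2 m1 h]; exact hlt1,
      fun i hi => by rw [heq1 i hi, heq2 i (h.trans hi)]⟩

lemma aggLe_trans {p q r : ℕ → ℕ} (h1 : AggLe p q) (h2 : AggLe q r) : AggLe p r := by
  rcases h1 with rfl | h1
  · exact h2
  rcases h2 with rfl | h2
  · exact Or.inr h1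
  · exact Or.inr (aggLt_trans h1 h2)

lemma aggLt_irrefl {p : ℕ → ℕ} (h : AggLt p p) : False := by
  obtain ⟨m, hm, -⟩ := h; omega

lemma aggLt_asymm {p q : ℕ → ℕ} (h1 : AggLt p q) (h2 : AggLt q p) : False := by
  obtain ⟨m1, hlt1, heq1⟩ := h1; obtain ⟨m2, hlt2, heq2⟩ := h2
  rcases lt_trichotomy m1 m2 with h | h | h
  · have := heq1 m2 h; omega
  · subst h; omega
  · have := heq2 m1 h; omega

lemma aggLe_not_lt {p q : ℕ → ℕ} (h1 : AggLe p q) (h2 : AggLt q p) : False := by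
  rcases h1 with rfl | h1
  · exact aggLt_irrefl h2
  · exact aggLt_asymm h1 h2

lemma agg_trichotomy {p q : ℕ → ℕ} (N : ℕ) (h : ∀ i, N < i → p i = q i) :
    p = q ∨ AggLt p q ∨ AggLt q p := by
  by_cases hpq : p = q
  · exact Or.inl hpq
  right
  have hne : ∃ i, p i ≠ q i := by
    by_contra h'; push_neg at h'; exact hpq (funext h')
  set D := (Finset.range (N + 1)).filter (fun i => p i ≠ q i) with hD
  have hDne : D.Nonempty := by
    obtain ⟨i, hi⟩ := hne
    refine ⟨i, Finset.mem_filter.mpr ⟨Finset.mem_range.mpr ?_, hi⟩⟩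
    by_contra h'; exact hi (h i (by omega))
  obtain ⟨m, hmD, hmax⟩ := D.exists_max_image id hDne
  have hmne : p m ≠ q m := (Finset.mem_filter.mp hmD).2
  have habove : ∀ i, m < i → p i = q i := by
    intro i hi
    by_contra hne'
    rcases Nat.lt_or_ge N i with hNi | hNi
    · exact hne' (h i hNi)
    · have : i ∈ D := Finset.mem_filter.mpr ⟨Finset.mem_range.mpr (by omega), hne'⟩
      have := hmax i this
      simp only [id] at this; omega
  rcases Nat.lt_or_ge (p m) (q m) with hlt | hge
  · exact Or.inl ⟨m, hlt, habove⟩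
  · exact Or.inr ⟨m, by omega, fun i hi => (habove i hi).symm⟩

lemma aggLe_add_left {f p q : ℕ → ℕ} (h : AggLe p q) :
    AggLe (fun j => f j + p j) (fun j => f j + q j) := by
  rcases h with rfl | ⟨m, h1, h2⟩
  · exact aggLe_refl _
  · exact Or.inr ⟨m, show f m + p m < f m + q m from Nat.add_lt_add_left h1 (f m), fun i hi => by show f i + p i = f i + q i; rw [h2 i hi]⟩

lemma aggLe_of_add_left {f p q : ℕ → ℕ}
    (h : AggLe (fun j => f j + p j) (fun j => f j + q j)) : AggLe p q := by
  rcases h with heq | ⟨m, h1, h2⟩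
  · left; funext j
    have : f j + p j = f j + q j := congrFun heq j
    omega
  · right
    have h1' : f m + p m < f m + q m := h1
    refine ⟨m, by omega, fun i hi => ?_⟩
    have : f i + p i = f i + q i := h2 i hi
    omega


namespace FailTree
variable {V : Type*} [Fintype V] (T : FailTree V)

lemma faggOn_bound (S Q : Finset V) {j : ℕ} (hj : Q.card < j) : T.faggOn S Q j = 0 := by
  unfold faggOn
  rw [Finset.card_eq_zero, Finset.filter_eq_empty_iff]
  intro v _
  have := T.fnum_le_card v Q
  omega

lemma faggOn_congr {S P Q : Finset V} (h : ∀ v ∈ S, T.fnum v P = T.fnum v Q) :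
    T.faggOn S P = T.faggOn S Q := by
  funext i
  unfold faggOn
  congr 1
  exact Finset.filter_congr (fun v hv => by rw [h v hv])

lemma faggOn_union {S S' : Finset V} (h : Disjoint S S') (Q : Finset V) (i : ℕ) :
    T.faggOn (S ∪ S') Q i = T.faggOn S Q i + T.faggOn S' Q i := by
  unfold faggOn
  rw [Finset.filter_union,
    Finset.card_union_of_disjoint (h.mono (Finset.filter_subset _ _) (Finset.filter_subset _ _))]

lemma faggOn_split (A B Q : Finset V) (i : ℕ) :
    T.faggOn A Q i = T.faggOn (A ∩ B) Q i + T.faggOn (A \ B) Q i := by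
  have hd : Disjoint (A \ B) (A ∩ B) := Finset.disjoint_sdiff_inter A B
  have h1 := T.faggOn_union hd Q i
  rw [Finset.sdiff_union_inter] at h1
  omega

lemma fagg_split (x : V) (Q : Finset V) (i : ℕ) :
    T.fagg Q i = T.faggOn (T.pathTo x) Q i + T.faggOn (Finset.univ \ T.pathTo x) Q i := by
  have hd : Disjoint (T.pathTo x) (Finset.univ \ T.pathTo x) := Finset.disjoint_sdiff
  have h1 : T.pathTo x ∪ (Finset.univ \ T.pathTo x) = Finset.univ :=
    Finset.union_sdiff_of_subset (Finset.subset_univ _)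
  have h2 := T.faggOn_union hd Q i
  rw [h1] at h2
  exact h2

lemma faggOn_sdiff_insert {x : V} {Q : Finset V} (hx : x ∉ Q) (i : ℕ) :
    T.faggOn (Finset.univ \ T.pathTo x) (insert x Q) i
      = T.faggOn (Finset.univ \ T.pathTo x) Q i := by
  have := T.faggOn_congr (S := Finset.univ \ T.pathTo x) (P := insert x Q) (Q := Q) ?_
  · exact congrFun this i
  · intro v hv
    have hnd : ¬ T.Desc x v := by
      intro hd
      exact (Finset.mem_sdiff.mp hv).2
        (Finset.mem_filter.mpr ⟨Finset.mem_univ _, hd⟩)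
    rw [T.fnum_insert hx, if_neg hnd]
    omega

lemma faggOn_path_insert_zero {x : V} {Q : Finset V} (hx : x ∉ Q) :
    T.faggOn (T.pathTo x) (insert x Q) 0 = 0 := by
  unfold faggOn
  rw [Finset.card_eq_zero, Finset.filter_eq_empty_iff]
  intro v hv
  have hd : T.Desc x v := (Finset.mem_filter.mp hv).2
  rw [T.fnum_insert hx, if_pos hd]
  omega

lemma faggOn_path_insert_succ {x : V} {Q : Finset V} (hx : x ∉ Q) (j : ℕ) :
    T.faggOn (T.pathTo x) (insert x Q) (j + 1) = T.faggOn (T.pathTo x) Q j := by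
  unfold faggOn
  congr 1
  apply Finset.filter_congr
  intro v hv
  have hd : T.Desc x v := (Finset.mem_filter.mp hv).2
  rw [T.fnum_insert hx, if_pos hd]
  omega

lemma fagg_insert_identity {x : V} {Q : Finset V} (hx : x ∉ Q) (j : ℕ) :
    T.fagg (insert x Q) (j + 1) + T.faggOn (T.pathTo x) Q (j + 1)
      = T.fagg Q (j + 1) + T.faggOn (T.pathTo x) Q j := by
  rw [T.fagg_split x (insert x Q) (j + 1), T.fagg_split x Q (j + 1),
    T.faggOn_path_insert_succ hx, T.faggOn_sdiff_insert hx]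
  omega

lemma fagg_insert_identity_zero {x : V} {Q : Finset V} (hx : x ∉ Q) :
    T.fagg (insert x Q) 0 + T.faggOn (T.pathTo x) Q 0 = T.fagg Q 0 := by
  rw [T.fagg_split x (insert x Q) 0, T.fagg_split x Q 0,
    T.faggOn_path_insert_zero hx, T.faggOn_sdiff_insert hx]
  omega

end FailTree


namespace FailTree
variable {V : Type*} [Fintype V] (T : FailTree V)

lemma fagg_insert_strict_mono {x y : V} {Q : Finset V} (hx : x ∉ Q) (hy : y ∉ Q)
    (h : AggLt (T.faggOn (T.pathTo x) Q) (T.faggOn (T.pathTo y) Q)) :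
    AggLt (T.fagg (insert x Q)) (T.fagg (insert y Q)) := by
  obtain ⟨m, hlt, heq⟩ := h
  refine ⟨m + 1, ?_, ?_⟩
  · have h1 := T.fagg_insert_identity hx m
    have h2 := T.fagg_insert_identity hy m
    have h3 := heq (m + 1) (by omega)
    omega
  · intro i hi
    obtain ⟨j, rfl⟩ : ∃ j, i = j + 1 := ⟨i - 1, by omega⟩
    have h1 := T.fagg_insert_identity hx j
    have h2 := T.fagg_insert_identity hy j
    have h3 := heq (j + 1) (by omega)
    have h4 := heq j (by omega)
    omega

lemma fagg_insert_congr {x y : V} {Q : Finset V} (hx : x ∉ Q) (hy : y ∉ Q)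
    (h : T.faggOn (T.pathTo x) Q = T.faggOn (T.pathTo y) Q) :
    T.fagg (insert x Q) = T.fagg (insert y Q) := by
  funext i
  cases i with
  | zero =>
    have h1 := T.fagg_insert_identity_zero hx
    have h2 := T.fagg_insert_identity_zero hy
    have h3 := congrFun h 0
    omega
  | succ j =>
    have h1 := T.fagg_insert_identity hx j
    have h2 := T.fagg_insert_identity hy j
    have h3 := congrFun h j
    have h4 := congrFun h (j + 1)
    omega

lemma fagg_insert_mono {x y : V} {Q : Finset V} (hx : x ∉ Q) (hy : y ∉ Q)
    (h : AggLe (T.faggOn (T.pathTo x) Q) (T.faggOn (T.pathTo y) Q)) :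
    AggLe (T.fagg (insert x Q)) (T.fagg (insert y Q)) := by
  rcases h with heq | hlt
  · exact Or.inl (T.fagg_insert_congr hx hy heq)
  · exact Or.inr (T.fagg_insert_strict_mono hx hy hlt)

lemma fagg_insert_reflect {x y : V} {Q : Finset V} (hx : x ∉ Q) (hy : y ∉ Q)
    (h : AggLe (T.fagg (insert x Q)) (T.fagg (insert y Q))) :
    AggLe (T.faggOn (T.pathTo x) Q) (T.faggOn (T.pathTo y) Q) := by
  rcases agg_trichotomy (p := T.faggOn (T.pathTo x) Q) (q := T.faggOn (T.pathTo y) Q) Q.card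
      (fun i hi => by rw [T.faggOn_bound _ _ hi, T.faggOn_bound _ _ hi]) with heq | hlt | hgt
  · exact Or.inl heq
  · exact Or.inr hlt
  · exact absurd (T.fagg_insert_strict_mono hy hx hgt) (fun h' => aggLe_not_lt h h')

lemma faggOn_le_of_fnum_le {S P Q : Finset V}
    (h : ∀ v ∈ S, T.fnum v P ≤ T.fnum v Q) :
    AggLe (T.faggOn S P) (T.faggOn S Q) := by
  set B := max P.card Q.card with hB
  have hbP : ∀ j, B < j → T.faggOn S P j = 0 := fun j hj => T.faggOn_bound _ _ (by omega)
  have hbQ : ∀ j, B < j → T.faggOn S Q j = 0 := fun j hj => T.faggOn_bound _ _ (by omega)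
  rcases agg_trichotomy (p := T.faggOn S P) (q := T.faggOn S Q) B
      (fun i hi => by rw [hbP i hi, hbQ i hi]) with heq | hlt | hgt
  · exact Or.inl heq
  · exact Or.inr hlt
  · exfalso
    obtain ⟨m, hm, hab⟩ := hgt
    set NP : ℕ → ℕ := fun j => (S.filter (fun v => j ≤ T.fnum v P)).card with hNP
    set NQ : ℕ → ℕ := fun j => (S.filter (fun v => j ≤ T.fnum v Q)).card with hNQ
    have hNle : ∀ j, NP j ≤ NQ j := by
      intro j
      apply Finset.card_le_card
      intro v hv
      have := Finset.mem_filter.mp hv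
      exact Finset.mem_filter.mpr ⟨this.1, le_trans this.2 (h v this.1)⟩
    have hrec : ∀ (R : Finset V) (j : ℕ),
        (S.filter (fun v => j ≤ T.fnum v R)).card
          = T.faggOn S R j + (S.filter (fun v => j + 1 ≤ T.fnum v R)).card := by
      intro R j
      have hsplit : S.filter (fun v => j ≤ T.fnum v R)
          = S.filter (fun v => T.fnum v R = j) ∪ S.filter (fun v => j + 1 ≤ T.fnum v R) := by
        ext v
        simp only [Finset.mem_union, Finset.mem_filter]
        constructor
        · rintro ⟨hvS, hle⟩
          rcases Nat.eq_or_lt_of_le hle with heq' | hlt'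
          · exact Or.inl ⟨hvS, heq'.symm⟩
          · exact Or.inr ⟨hvS, hlt'⟩
        · rintro (⟨hvS, heq'⟩ | ⟨hvS, hle'⟩)
          · exact ⟨hvS, by omega⟩
          · exact ⟨hvS, by omega⟩
      have hdisj : Disjoint (S.filter (fun v => T.fnum v R = j))
          (S.filter (fun v => j + 1 ≤ T.fnum v R)) := by
        rw [Finset.disjoint_left]
        intro a ha ha'
        have h1 := (Finset.mem_filter.mp ha).2
        have h2 := (Finset.mem_filter.mp ha').2
        omega
      rw [hsplit, Finset.card_union_of_disjoint hdisj]
      rfl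
    have hzeroP : ∀ j, B < j → NP j = 0 := by
      intro j hj
      rw [hNP]
      simp only []
      rw [Finset.card_eq_zero, Finset.filter_eq_empty_iff]
      intro v _
      have := T.fnum_le_card v P
      omega
    have hzeroQ : ∀ j, B < j → NQ j = 0 := by
      intro j hj
      rw [hNQ]
      simp only []
      rw [Finset.card_eq_zero, Finset.filter_eq_empty_iff]
      intro v _
      have := T.fnum_le_card v Q
      omega
    have key : ∀ d j, B + 1 ≤ j + d → m < j → NP j = NQ j := by
      intro d
      induction d with
      | zero =>
        intro j hj hmj
        rw [hzeroP j (by omega), hzeroQ j (by omega)]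
      | succ d ih =>
        intro j hj hmj
        by_cases hjB : B < j
        · rw [hzeroP j hjB, hzeroQ j hjB]
        · have e1 : NP j = T.faggOn S P j + NP (j + 1) := hrec P j
          have e2 : NQ j = T.faggOn S Q j + NQ (j + 1) := hrec Q j
          have e3 := ih (j + 1) (by omega) (by omega)
          have e4 := hab j hmj
          omega
    have h1 : NP m = T.faggOn S P m + NP (m + 1) := hrec P m
    have h2 : NQ m = T.faggOn S Q m + NQ (m + 1) := hrec Q m
    have h3 := key (B + 1) (m + 1) (by omega) (by omega)
    have h4 := hNle m
    omega

end FailTree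

lemma exists_agg_min {γ : Type*} (s : Finset γ) (f : γ → ℕ → ℕ) (B : ℕ)
    (hs : s.Nonempty) (hB : ∀ a ∈ s, ∀ j, B < j → f a j = 0) :
    ∃ a ∈ s, ∀ b ∈ s, AggLe (f a) (f b) := by
  classical
  revert hs hB
  induction s using Finset.induction_on with
  | empty =>
    intro hs _
    simp at hs
  | @insert a s ha ih =>
    intro _ hB
    by_cases hse : s.Nonempty
    · obtain ⟨b, hb, hmin⟩ := ih hse (fun c hc => hB c (Finset.mem_insert_of_mem hc))
      have hfa := hB a (Finset.mem_insert_self a s)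
      have hfb := hB b (Finset.mem_insert_of_mem hb)
      rcases agg_trichotomy (p := f a) (q := f b) B
          (fun i hi => by rw [hfa i hi, hfb i hi]) with heq | hlt | hgt
      · refine ⟨a, Finset.mem_insert_self a s, fun c hc => ?_⟩
        rcases Finset.mem_insert.mp hc with rfl | hc
        · exact aggLe_refl _
        · rw [heq]; exact hmin c hc
      · refine ⟨a, Finset.mem_insert_self a s, fun c hc => ?_⟩
        rcases Finset.mem_insert.mp hc with rfl | hc
        · exact aggLe_refl _
        · exact aggLe_trans (Or.inr hlt) (hmin c hc)
      · refine ⟨b, Finset.mem_insert_of_mem hb, fun c hc => ?_⟩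
        rcases Finset.mem_insert.mp hc with rfl | hc
        · exact Or.inr hgt
        · exact hmin c hc
    · have hse' : s = ∅ := Finset.not_nonempty_iff_eq_empty.mp hse
      subst hse'
      refine ⟨a, Finset.mem_insert_self a ∅, fun c hc => ?_⟩
      rcases Finset.mem_insert.mp hc with rfl | hc
      · exact aggLe_refl _
      · simp at hc


/-- Theorem 1 (greedy optimality): if `Pseq` is the greedy sequence of partial
placements (each step adds a leaf lexicominimizing the failure aggregate), then every
partial placement `Pseq i` (for `i ≤ ρ`) extends to an optimal placement of size `ρ`. -/
theorem greedy_subset_of_optimal {V : Type*} [Fintype V] (T : FailTree V)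
    (ρ : ℕ) (hρ : ρ ≤ T.leaves.card)
    (Pseq : ℕ → Finset V) (h0 : Pseq 0 = ∅)
    (hstep : ∀ i < ρ, ∃ u ∈ T.leaves, u ∉ Pseq i ∧ Pseq (i + 1) = insert u (Pseq i) ∧
      ∀ u' ∈ T.leaves, u' ∉ Pseq i →
        AggLe (T.fagg (insert u (Pseq i))) (T.fagg (insert u' (Pseq i)))) :
    ∀ i ≤ ρ, ∃ Pstar : Finset V, Pstar ⊆ T.leaves ∧ Pstar.card = ρ ∧
      (∀ Q : Finset V, Q ⊆ T.leaves → Q.card = ρ → AggLe (T.fagg Pstar) (T.fagg Q)) ∧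
      Pseq i ⊆ Pstar := by
  classical
  -- an optimal placement exists
  have hCne : (T.leaves.powersetCard ρ).Nonempty := by
    obtain ⟨t, ht, hcard⟩ := Finset.exists_subset_card_eq hρ
    exact ⟨t, Finset.mem_powersetCard.mpr ⟨ht, hcard⟩⟩
  obtain ⟨P0, hP0C, hP0min⟩ := exists_agg_min (T.leaves.powersetCard ρ)
      (fun Q => T.fagg Q) ρ hCne (fun a ha j hj => by
        have hcard := (Finset.mem_powersetCard.mp ha).2
        exact T.faggOn_bound Finset.univ a (by omega))
  have hP0sub := (Finset.mem_powersetCard.mp hP0C).1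
  have hP0card := (Finset.mem_powersetCard.mp hP0C).2
  -- cardinality of the greedy sets
  have hcardP : ∀ i ≤ ρ, (Pseq i).card = i := by
    intro i
    induction i with
    | zero => intro _; rw [h0]; simp
    | succ n ih =>
      intro hn
      obtain ⟨u, hu, hunotin, heq, -⟩ := hstep n (by omega)
      rw [heq, Finset.card_insert_of_notMem hunotin, ih (by omega)]
  intro i
  induction i with
  | zero =>
    intro _
    exact ⟨P0, hP0sub, hP0card,
      fun Q hQ hQc => hP0min Q (Finset.mem_powersetCard.mpr ⟨hQ, hQc⟩),
      by rw [h0]; exact Finset.empty_subset _⟩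
  | succ n ih =>
    intro hn1
    obtain ⟨Pstar, hPsub, hPcard, hPopt, hPcont⟩ := ih (by omega)
    obtain ⟨u, huL, hunotin, heqP, hgreedy⟩ := hstep n (by omega)
    by_cases huP : u ∈ Pstar
    · exact ⟨Pstar, hPsub, hPcard, hPopt,
        by rw [heqP]; exact Finset.insert_subset huP hPcont⟩
    -- exchange argument
    set P := Pseq n with hPdef
    set R := Pstar \ P with hRdef
    have hRne : R.Nonempty := by
      rw [hRdef, Finset.sdiff_nonempty]
      intro hsub
      have := Finset.card_le_card hsub
      rw [hPcard, hcardP n (by omega)] at this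
      omega
    set Sz := Finset.univ.filter (fun v => T.Desc u v ∧ ∃ r ∈ R, T.Desc r v) with hSzdef
    have hSzne : Sz.Nonempty := by
      obtain ⟨r, hr⟩ := hRne
      exact ⟨T.root, Finset.mem_filter.mpr
        ⟨Finset.mem_univ _, T.desc_root u, r, hr, T.desc_root r⟩⟩
    obtain ⟨z, hzS, hzmax⟩ := Sz.exists_max_image T.depth hSzne
    obtain ⟨-, huz, w, hwR, hwz⟩ := Finset.mem_filter.mp hzS
    have hzmin : ∀ v, T.Desc u v → (∀ r ∈ R, ¬ T.Desc r v → True) → (∃ r ∈ R, T.Desc r v) →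
        T.Desc z v := by
      intro v hv _ hr
      have hvS : v ∈ Sz := Finset.mem_filter.mpr ⟨Finset.mem_univ _, hv, hr⟩
      have hdep : T.depth v ≤ T.depth z := hzmax v hvS
      rcases T.desc_comparable huz hv with h | h
      · exact h
      · rcases T.depth_lt_of_desc h with rfl | hlt
        · exact T.desc_refl _
        · omega
    have hwPstar : w ∈ Pstar := (Finset.mem_sdiff.mp hwR).1
    have hwnotP : w ∉ P := (Finset.mem_sdiff.mp hwR).2
    have hwL : w ∈ T.leaves := hPsub hwPstar
    set Q := Pstar.erase w with hQdef
    have huQ : u ∉ Q := fun h => huP (Finset.erase_subset _ _ h)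
    have hwQ : w ∉ Q := Finset.notMem_erase _ _
    have hPQ : P ⊆ Q := by
      intro p hp
      exact Finset.mem_erase.mpr ⟨fun h => hwnotP (h ▸ hp), hPcont hp⟩
    have hinsQ : insert w Q = Pstar := Finset.insert_erase hwPstar
    -- fnum equality on Au \ Aw
    have hfnum_eq : ∀ v ∈ T.pathTo u \ T.pathTo w, T.fnum v Q = T.fnum v P := by
      intro v hv
      obtain ⟨hvu, hvw⟩ := Finset.mem_sdiff.mp hv
      have hvdesc : T.Desc u v := (Finset.mem_filter.mp hvu).2
      unfold FailTree.fnum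
      congr 1
      ext q
      simp only [Finset.mem_filter]
      constructor
      · rintro ⟨hqQ, hdesc⟩
        refine ⟨?_, hdesc⟩
        by_contra hqP
        have hqPstar : q ∈ Pstar := Finset.erase_subset _ _ hqQ
        have hqR : q ∈ R := Finset.mem_sdiff.mpr ⟨hqPstar, hqP⟩
        have hzv : T.Desc z v := hzmin v hvdesc (fun _ _ _ => trivial) ⟨q, hqR, hdesc⟩
        exact hvw (Finset.mem_filter.mpr ⟨Finset.mem_univ _, T.desc_trans hwz hzv⟩)
      · rintro ⟨hqP, hdesc⟩
        exact ⟨hPQ hqP, hdesc⟩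
    -- greedy comparison pulled down to path vectors
    have hgr : AggLe (T.fagg (insert u P)) (T.fagg (insert w P)) := hgreedy w hwL hwnotP
    have hcP : AggLe (T.faggOn (T.pathTo u) P) (T.faggOn (T.pathTo w) P) :=
      T.fagg_insert_reflect hunotin hwnotP hgr
    -- split into common and exclusive parts
    set Au := T.pathTo u with hAu
    set Aw := T.pathTo w with hAw
    have hsplitUP : T.faggOn Au P
        = fun i => T.faggOn (Au ∩ Aw) P i + T.faggOn (Au \ Aw) P i :=
      funext (fun i => T.faggOn_split Au Aw P i)
    have hsplitWP : T.faggOn Aw P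
        = fun i => T.faggOn (Au ∩ Aw) P i + T.faggOn (Aw \ Au) P i := by
      funext i
      rw [T.faggOn_split Aw Au P i, Finset.inter_comm]
    rw [hsplitUP, hsplitWP] at hcP
    have heP : AggLe (T.faggOn (Au \ Aw) P) (T.faggOn (Aw \ Au) P) :=
      aggLe_of_add_left hcP
    -- move the comparison to Q
    have heUQ : T.faggOn (Au \ Aw) Q = T.faggOn (Au \ Aw) P := T.faggOn_congr hfnum_eq
    have heWQ : AggLe (T.faggOn (Aw \ Au) P) (T.faggOn (Aw \ Au) Q) :=
      T.faggOn_le_of_fnum_le (fun v _ => T.fnum_mono hPQ v)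
    have heQ : AggLe (T.faggOn (Au \ Aw) Q) (T.faggOn (Aw \ Au) Q) := by
      rw [heUQ]
      exact aggLe_trans heP heWQ
    have hcQ : AggLe (T.faggOn Au Q) (T.faggOn Aw Q) := by
      have hsplitUQ : T.faggOn Au Q
          = fun i => T.faggOn (Au ∩ Aw) Q i + T.faggOn (Au \ Aw) Q i :=
        funext (fun i => T.faggOn_split Au Aw Q i)
      have hsplitWQ : T.faggOn Aw Q
          = fun i => T.faggOn (Au ∩ Aw) Q i + T.faggOn (Aw \ Au) Q i := by
        funext i
        rw [T.faggOn_split Aw Au Q i, Finset.inter_comm]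
      rw [hsplitUQ, hsplitWQ]
      exact aggLe_add_left heQ
    have hfinal : AggLe (T.fagg (insert u Q)) (T.fagg Pstar) := by
      rw [← hinsQ]
      exact T.fagg_insert_mono huQ hwQ hcQ
    have hρpos : 0 < ρ := by
      rw [← hPcard]
      exact Finset.card_pos.mpr ⟨w, hwPstar⟩
    refine ⟨insert u Q, ?_, ?_, ?_, ?_⟩
    · exact Finset.insert_subset huL ((Finset.erase_subset _ _).trans hPsub)
    · rw [Finset.card_insert_of_notMem huQ, hQdef, Finset.card_erase_of_mem hwPstar, hPcard]
      omega
    · intro Q' hQ' hQc'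
      exact aggLe_trans hfinal (hPopt Q' hQ' hQc')
    · rw [heqP]
      exact Finset.insert_subset_insert u hPQ
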